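/- For any q > 0, the function φ(δ) = (1/q)·ln(1 + 4/δ) - ln(1 - δ) on (0,1) attains its unique minimum at δ₁ = (2/q)(√(q²+3q+1) - (q+1)) ∈ (0,1), and the minimum value of exp(φ) equals ((3q+2+2Q)/(5q))·(3+2q+2Q)^{1/q}, where Q = √(q²+3q+1). -/

import Mathlib

/-- For `q > 0`, the function `φ(δ) = (1/q) ln(1 + 4/δ) - ln(1 - δ)` on `(0,1)` is
strictly convex, attains its unique minimum at `δ₁ = (2/q)(√(q²+3q+1) - (q+1)) ∈ (0,1)`,
and `exp(φ(δ₁)) = ((3q+2+2Q)/(5q)) (3+2q+2Q)^{1/q}` where `Q = √(q²+3q+1)`. -/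
theorem stmt_13 (q : ℝ) (hq : 0 < q)
    (φ : ℝ → ℝ) (hφ : ∀ δ ∈ Set.Ioo (0 : ℝ) 1, φ δ = 1 / q * Real.log (1 + 4 / δ) - Real.log (1 - δ))
    (Q δ₁ : ℝ) (hQ : Q = Real.sqrt (q ^ 2 + 3 * q + 1))
    (hδ₁ : δ₁ = 2 / q * (Q - (q + 1))) :
    δ₁ ∈ Set.Ioo (0 : ℝ) 1 ∧
    StrictConvexOn ℝ (Set.Ioo (0 : ℝ) 1) φ ∧
    (∀ δ ∈ Set.Ioo (0 : ℝ) 1, φ δ₁ ≤ φ δ) ∧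
    (∀ δ ∈ Set.Ioo (0 : ℝ) 1, φ δ = φ δ₁ → δ = δ₁) ∧
    Real.exp (φ δ₁) = (3 * q + 2 + 2 * Q) / (5 * q) * (3 + 2 * q + 2 * Q) ^ (1 / q) := by
  have hQ2 : Q ^ 2 = q ^ 2 + 3 * q + 1 := by
    rw [hQ, Real.sq_sqrt (by nlinarith)]
  have hQpos : 0 < Q := by rw [hQ]; apply Real.sqrt_pos.2; nlinarith
  have hQgt : q + 1 < Q := by nlinarith
  have h2Q : 2 * Q < 3 * q + 2 := by nlinarith
  have ha0 : 0 < δ₁ := by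
    rw [hδ₁]; exact mul_pos (by positivity) (by linarith)
  have ha1 : δ₁ < 1 := by
    rw [hδ₁, div_mul_eq_mul_div, div_lt_one hq]; nlinarith
  have hroot : q * δ₁ ^ 2 + (4 * q + 4) * δ₁ - 4 = 0 := by
    rw [hδ₁]; field_simp; nlinarith [hQ2]
  set d : ℝ → ℝ := fun δ => 1 / (1 - δ) - 4 / (q * δ * (δ + 4)) with hd
  -- φ has derivative d on (0,1)
  have hder : ∀ x ∈ Set.Ioo (0:ℝ) 1, HasDerivAt φ (d x) x := by
    intro x hx
    have hg : HasDerivAt (fun δ : ℝ => 1 / q * Real.log (1 + 4 / δ) - Real.log (1 - δ))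
        (1 / (1 - x) - 4 / (q * x * (x + 4))) x := by
      obtain ⟨hx0, hx1⟩ := hx
      have h1x : (0:ℝ) < 1 - x := by linarith
      have h4 : (0:ℝ) < 1 + 4 / x := by positivity
      have h1 : HasDerivAt (fun δ : ℝ => 1 + 4 / δ) (-(4 / x ^ 2)) x := by
        have := ((hasDerivAt_inv hx0.ne').const_mul (4:ℝ)).const_add (1:ℝ)
        refine this.congr_deriv ?_
        ring
      have h2 : HasDerivAt (fun δ : ℝ => Real.log (1 + 4 / δ)) (-(4 / x ^ 2) / (1 + 4 / x)) x :=
        h1.log h4.ne'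
      have h3 : HasDerivAt (fun δ : ℝ => 1 - δ) (-1) x := (hasDerivAt_id x).const_sub 1
      have h5 : HasDerivAt (fun δ : ℝ => Real.log (1 - δ)) (-1 / (1 - x)) x := h3.log h1x.ne'
      have h6 := (h2.const_mul (1 / q)).sub h5
      refine h6.congr_deriv ?_
      have hx4 : (0:ℝ) < x + 4 := by linarith
      field_simp
      ring
    exact hg.congr_of_eventuallyEq <|
      Filter.eventuallyEq_of_mem (isOpen_Ioo.mem_nhds hx) fun y hy => hφ y hy
  have hderiv : ∀ x ∈ Set.Ioo (0:ℝ) 1, deriv φ x = d x := fun x hx => (hder x hx).deriv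
  have hcont : ContinuousOn φ (Set.Ioo (0:ℝ) 1) :=
    fun x hx => (hder x hx).continuousAt.continuousWithinAt
  -- second derivative
  have hder2 : ∀ x ∈ Set.Ioo (0:ℝ) 1, HasDerivAt d
      (1 / (1 - x) ^ 2 + 4 * (q * (2 * x + 4)) / (q * x * (x + 4)) ^ 2) x := by
    intro x hx
    obtain ⟨hx0, hx1⟩ := hx
    have h1x : (0:ℝ) < 1 - x := by linarith
    have hx4 : (0:ℝ) < x + 4 := by linarith
    have hden : q * x * (x + 4) ≠ 0 := by positivity
    have h3 : HasDerivAt (fun δ : ℝ => 1 - δ) (-1) x := (hasDerivAt_id x).const_sub 1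
    have h7 : HasDerivAt (fun δ : ℝ => 1 / (1 - δ)) (1 / (1 - x) ^ 2) x := by
      have := (h3.inv h1x.ne').const_mul (1:ℝ)
      refine this.congr_deriv ?_
      ring
    have h8 : HasDerivAt (fun δ : ℝ => q * δ * (δ + 4)) (q * (2 * x + 4)) x := by
      have := ((hasDerivAt_id x).const_mul q).mul ((hasDerivAt_id x).add_const 4)
      refine this.congr_deriv ?_
      simp only [id]; ring
    have h9 : HasDerivAt (fun δ : ℝ => 4 / (q * δ * (δ + 4)))
        (4 * (-(q * (2 * x + 4)) / (q * x * (x + 4)) ^ 2)) x := by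
      have := (h8.inv hden).const_mul (4:ℝ)
      exact this
    have := h7.sub h9
    refine this.congr_deriv ?_
    ring
  have hconv : StrictConvexOn ℝ (Set.Ioo (0 : ℝ) 1) φ := by
    apply strictConvexOn_of_deriv2_pos (convex_Ioo 0 1) hcont
    intro x hx
    rw [interior_Ioo] at hx
    have e2 : deriv (deriv φ) x
        = 1 / (1 - x) ^ 2 + 4 * (q * (2 * x + 4)) / (q * x * (x + 4)) ^ 2 := by
      have : deriv φ =ᶠ[nhds x] d :=
        Filter.eventuallyEq_of_mem (isOpen_Ioo.mem_nhds hx) fun y hy => hderiv y hy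
      rw [this.deriv_eq]
      exact (hder2 x hx).deriv
    simp only [Function.iterate_succ, Function.iterate_zero, Function.comp_apply, id]
    rw [e2]
    obtain ⟨hx0, hx1⟩ := hx
    have h1x : (0:ℝ) < 1 - x := by linarith
    have hx4 : (0:ℝ) < x + 4 := by linarith
    positivity
  -- sign of d : negative on (0, δ₁), positive on (δ₁, 1)
  have hdneg : ∀ x ∈ Set.Ioo (0:ℝ) δ₁, d x < 0 := by
    intro x hx
    obtain ⟨hx0, hx1⟩ := hx
    have h1x : (0:ℝ) < 1 - x := by nlinarith
    have hx4 : (0:ℝ) < x + 4 := by linarith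
    have hdd : (0:ℝ) < q * x * (x + 4) := by positivity
    have key : 1 * (q * x * (x + 4)) < 4 * (1 - x) := by
      nlinarith [hroot, mul_pos (sub_pos.2 hx1) (show (0:ℝ) < q * x + q * δ₁ + 4 * q + 4 by positivity)]
    have : 1 / (1 - x) < 4 / (q * x * (x + 4)) := (div_lt_div_iff₀ h1x hdd).2 key
    simp only [hd]
    linarith
  have hdpos : ∀ x ∈ Set.Ioo δ₁ 1, 0 < d x := by
    intro x hx
    obtain ⟨hx0, hx1⟩ := hx
    have h1x : (0:ℝ) < 1 - x := by linarith
    have hx4 : (0:ℝ) < x + 4 := by linarith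
    have hxp : (0:ℝ) < x := lt_trans ha0 hx0
    have hdd : (0:ℝ) < q * x * (x + 4) := by positivity
    have key : 4 * (1 - x) < 1 * (q * x * (x + 4)) := by
      nlinarith [hroot, mul_pos (sub_pos.2 hx0) (show (0:ℝ) < q * x + q * δ₁ + 4 * q + 4 by positivity)]
    have : 4 / (q * x * (x + 4)) < 1 / (1 - x) := (div_lt_div_iff₀ hdd h1x).2 key
    simp only [hd]
    linarith
  have hIocsub : Set.Ioc (0:ℝ) δ₁ ⊆ Set.Ioo (0:ℝ) 1 :=
    fun y hy => ⟨hy.1, lt_of_le_of_lt hy.2 ha1⟩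
  have hIcosub : Set.Ico δ₁ (1:ℝ) ⊆ Set.Ioo (0:ℝ) 1 :=
    fun y hy => ⟨lt_of_lt_of_le ha0 hy.1, hy.2⟩
  have hanti : StrictAntiOn φ (Set.Ioc (0:ℝ) δ₁) := by
    apply strictAntiOn_of_deriv_neg (convex_Ioc 0 δ₁) (hcont.mono hIocsub)
    intro x hx
    rw [interior_Ioc] at hx
    rw [hderiv x ⟨hx.1, lt_trans hx.2 ha1⟩]
    exact hdneg x hx
  have hmono : StrictMonoOn φ (Set.Ico δ₁ (1:ℝ)) := by
    apply strictMonoOn_of_deriv_pos (convex_Ico δ₁ 1) (hcont.mono hIcosub)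
    intro x hx
    rw [interior_Ico] at hx
    rw [hderiv x ⟨lt_trans ha0 hx.1, hx.2⟩]
    exact hdpos x hx
  have hmin : ∀ δ ∈ Set.Ioo (0:ℝ) 1, δ ≠ δ₁ → φ δ₁ < φ δ := by
    intro δ hδ hne
    rcases lt_or_gt_of_ne hne with h | h
    · exact hanti ⟨hδ.1, h.le⟩ ⟨ha0, le_refl δ₁⟩ h
    · exact hmono ⟨le_refl δ₁, ha1⟩ ⟨h.le, hδ.2⟩ h
  refine ⟨⟨ha0, ha1⟩, hconv, ?_, ?_, ?_⟩
  · intro δ hδ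
    by_cases h : δ = δ₁
    · rw [h]
    · exact (hmin δ hδ h).le
  · intro δ hδ heq
    by_contra h
    exact absurd heq (ne_of_gt (hmin δ hδ h))
  · -- value computation
    have h1d : 0 < 1 - δ₁ := by linarith
    have hA : 1 + 4 / δ₁ = 3 + 2 * q + 2 * Q := by
      rw [hδ₁]
      have hne : Q - (q + 1) ≠ 0 := by intro h; nlinarith
      field_simp
      nlinarith [hQ2]
    have hApos : (0:ℝ) < 3 + 2 * q + 2 * Q := by linarith
    rw [hφ δ₁ ⟨ha0, ha1⟩, Real.exp_sub, Real.exp_log h1d, hA]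
    have hrp : Real.exp (1 / q * Real.log (3 + 2 * q + 2 * Q))
        = (3 + 2 * q + 2 * Q) ^ (1 / q) := by
      rw [Real.rpow_def_of_pos hApos, mul_comm]
    rw [hrp]
    have h5 : (0:ℝ) < 3 * q + 2 - 2 * Q := by linarith
    have hB : 1 - δ₁ = (3 * q + 2 - 2 * Q) / q := by
      rw [hδ₁]; field_simp; ring
    have hkey : (1 - δ₁)⁻¹ = (3 * q + 2 + 2 * Q) / (5 * q) := by
      rw [hB, inv_div, div_eq_div_iff h5.ne' (by positivity)]
      linear_combination 4 * hQ2
    rw [div_eq_mul_inv, hkey]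
    ring
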